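/- Let (K, π, τ_K) be a real coisotropic quantum left subgroup of F and ρ_R a right corepresentation of K on V. Then the restriction of id_V⊗Δ to ind_K^G(ρ_R) maps ind_K^G(ρ_R) into ind_K^G(ρ_R)⊗F (viewed inside V⊗F⊗F), and defines a right F-comodule structure on ind_K^G(ρ_R) (the coassociativity and counit axioms hold). This is the induced corepresentation of F. -/

import Mathlib

open scoped TensorProduct
open Coalgebra

noncomputable section

section AuxHelpers

variable {R : Type*} [CommRing R]
variable {V K F F' : Type*} [AddCommGroup V] [Module R V] [AddCommGroup K] [Module R K]
  [AddCommGroup F] [Module R F] [AddCommGroup F'] [Module R F']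

lemma aux_pent2 (u : (V ⊗[R] K) ⊗[R] (F ⊗[R] F')) :
    LinearMap.rTensor F' (TensorProduct.assoc R V K F).toLinearMap
        ((TensorProduct.assoc R (V ⊗[R] K) F F').symm u)
      = (TensorProduct.assoc R V (K ⊗[R] F) F').symm
          (LinearMap.lTensor V (TensorProduct.assoc R K F F').symm.toLinearMap
            ((TensorProduct.assoc R V K (F ⊗[R] F')) u)) := by
  have : (LinearMap.rTensor F' (TensorProduct.assoc R V K F).toLinearMap ∘ₗ
      (TensorProduct.assoc R (V ⊗[R] K) F F').symm.toLinearMap)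
      = ((TensorProduct.assoc R V (K ⊗[R] F) F').symm.toLinearMap ∘ₗ
          LinearMap.lTensor V (TensorProduct.assoc R K F F').symm.toLinearMap ∘ₗ
          (TensorProduct.assoc R V K (F ⊗[R] F')).toLinearMap) := by
    ext v k f f'
    rfl
  exact LinearMap.congr_fun this u

lemma aux_pent3 (t : V ⊗[R] (F ⊗[R] (F ⊗[R] F'))) :
    (TensorProduct.assoc R (V ⊗[R] F) F F')
      (LinearMap.rTensor F' (TensorProduct.assoc R V F F).symm.toLinearMap
        ((TensorProduct.assoc R V (F ⊗[R] F) F').symm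
          (LinearMap.lTensor V (TensorProduct.assoc R F F F').symm.toLinearMap t)))
      = (TensorProduct.assoc R V F (F ⊗[R] F')).symm t := by
  have : ((TensorProduct.assoc R (V ⊗[R] F) F F').toLinearMap ∘ₗ
      LinearMap.rTensor F' (TensorProduct.assoc R V F F).symm.toLinearMap ∘ₗ
      (TensorProduct.assoc R V (F ⊗[R] F) F').symm.toLinearMap ∘ₗ
      LinearMap.lTensor V (TensorProduct.assoc R F F F').symm.toLinearMap)
      = (TensorProduct.assoc R V F (F ⊗[R] F')).symm.toLinearMap := by
    ext v f g h
    rfl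
  exact LinearMap.congr_fun this t

lemma aux_counit (x : V ⊗[R] F) :
    (TensorProduct.rid R (V ⊗[R] F))
      ((TensorProduct.assoc R V F R).symm
        (LinearMap.lTensor V ((TensorProduct.mk R F R).flip 1) x)) = x := by
  have : ((TensorProduct.rid R (V ⊗[R] F)).toLinearMap ∘ₗ
      (TensorProduct.assoc R V F R).symm.toLinearMap ∘ₗ
      LinearMap.lTensor V ((TensorProduct.mk R F R).flip 1)) = LinearMap.id := by
    ext v f
    simp
  exact LinearMap.congr_fun this x

lemma aux_nat_symm (f : V →ₗ[R] K) (x : V ⊗[R] (F ⊗[R] F')) :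
    LinearMap.rTensor F' (LinearMap.rTensor F f)
        ((TensorProduct.assoc R V F F').symm x)
      = (TensorProduct.assoc R K F F').symm (LinearMap.rTensor (F ⊗[R] F') f x) := by
  have := TensorProduct.map_map_assoc_symm f (LinearMap.id (R := R) (M := F))
    (LinearMap.id (R := R) (M := F')) x
  simpa [LinearMap.rTensor, TensorProduct.map_id] using this

lemma aux_nat_symm_mid (g : F →ₗ[R] K) (x : V ⊗[R] (F ⊗[R] F')) :
    LinearMap.rTensor F' (LinearMap.lTensor V g)
        ((TensorProduct.assoc R V F F').symm x)
      = (TensorProduct.assoc R V K F').symm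
          (LinearMap.lTensor V (LinearMap.rTensor F' g) x) := by
  have := TensorProduct.map_map_assoc_symm (LinearMap.id (R := R) (M := V)) g
    (LinearMap.id (R := R) (M := F')) x
  simpa [LinearMap.rTensor, LinearMap.lTensor, TensorProduct.map_id] using this

lemma aux_nat_symm_right (h : F' →ₗ[R] K) (x : V ⊗[R] (F ⊗[R] F')) :
    LinearMap.lTensor (V ⊗[R] F) h ((TensorProduct.assoc R V F F').symm x)
      = (TensorProduct.assoc R V F K).symm
          (LinearMap.lTensor V (LinearMap.lTensor F h) x) := by
  have := TensorProduct.map_map_assoc_symm (LinearMap.id (R := R) (M := V))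
    (LinearMap.id (R := R) (M := F)) h x
  simpa [LinearMap.rTensor, LinearMap.lTensor, TensorProduct.map_id] using this

lemma aux_nat_right (h : F' →ₗ[R] K) (x : (V ⊗[R] F) ⊗[R] F') :
    LinearMap.lTensor V (LinearMap.lTensor F h) ((TensorProduct.assoc R V F F') x)
      = (TensorProduct.assoc R V F K) (LinearMap.lTensor (V ⊗[R] F) h x) := by
  have := TensorProduct.map_map_assoc (LinearMap.id (R := R) (M := V))
    (LinearMap.id (R := R) (M := F)) h x
  simpa [LinearMap.rTensor, LinearMap.lTensor, TensorProduct.map_id] using this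

lemma aux_nat_assoc_left (f : V →ₗ[R] K) (z : (V ⊗[R] F) ⊗[R] F') :
    LinearMap.rTensor (F ⊗[R] F') f ((TensorProduct.assoc R V F F') z)
      = (TensorProduct.assoc R K F F')
          (LinearMap.rTensor F' (LinearMap.rTensor F f) z) := by
  have := TensorProduct.map_map_assoc f (LinearMap.id (R := R) (M := F))
    (LinearMap.id (R := R) (M := F')) z
  simpa [LinearMap.rTensor, TensorProduct.map_id] using this

lemma aux_swap (f : V →ₗ[R] K) (g : F →ₗ[R] F') (x : V ⊗[R] F) :
    LinearMap.rTensor F' f (LinearMap.lTensor V g x)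
      = LinearMap.lTensor K g (LinearMap.rTensor F f x) := by
  rw [← LinearMap.comp_apply, ← LinearMap.comp_apply,
    LinearMap.rTensor_comp_lTensor, LinearMap.lTensor_comp_rTensor]

end AuxHelpers

section CoalgHelpers

variable {R : Type*} [CommRing R]
variable {K F : Type*} [AddCommGroup K] [Module R K]
  [AddCommGroup F] [Module R F] [Coalgebra R F]

lemma aux_g1 (π : F →ₗ[R] K) (a : F) :
    LinearMap.rTensor F (LinearMap.rTensor F π ∘ₗ (comul (R := R) (A := F))) (comul a)
      = (TensorProduct.assoc R K F F).symm
          (LinearMap.lTensor K (comul (R := R) (A := F))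
            (LinearMap.rTensor F π (comul a))) := by
  rw [LinearMap.rTensor_comp_apply, ← aux_swap π (comul (R := R) (A := F)) (comul a),
    ← Coalgebra.coassoc_symm_apply, aux_nat_symm]

end CoalgHelpers

variable {F : Type*} [Ring F] [HopfAlgebra ℂ F] [StarRing F] [StarModule ℂ F]
variable {K : Type*} [AddCommGroup K] [Module ℂ K] [Coalgebra ℂ K]
variable {V : Type*} [AddCommGroup V] [Module ℂ V]

/-- The left quantum homogeneous space `B_π = {a | (π ⊗ id)(Δ a) = π(1) ⊗ a}`,
as a subspace of `F`. -/
def Bpi (π : F →ₗ[ℂ] K) : Submodule ℂ F :=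
  LinearMap.ker ((LinearMap.rTensor F π ∘ₗ Coalgebra.comul) - TensorProduct.mk ℂ K F (π 1))

/-- The induced space `ind_K^G(ρ_R) = {A ∈ V ⊗ F | (id ⊗ L)A = (ρ_R ⊗ id)A}`,
where `L = (π ⊗ id) ∘ Δ`. -/
def indK (π : F →ₗ[ℂ] K) (ρR : V →ₗ[ℂ] V ⊗[ℂ] K) : Submodule ℂ (V ⊗[ℂ] F) :=
  LinearMap.ker (LinearMap.lTensor V (LinearMap.rTensor F π ∘ₗ Coalgebra.comul)
    - (TensorProduct.assoc ℂ V K F).toLinearMap ∘ₗ LinearMap.rTensor F ρR)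

set_option maxHeartbeats 1000000 in
/-- The restriction of `id ⊗ Δ` to `ind_K^G(ρ_R)` takes values in
`ind_K^G(ρ_R) ⊗ F ⊆ V ⊗ F ⊗ F` and defines a right `F`-comodule structure on
`ind_K^G(ρ_R)`: the induced corepresentation. -/
theorem statement13
    (hcomul_star : ∀ (a : F) {ι : Type*} (r : Coalgebra.Repr ℂ a ι),
      Coalgebra.comul (star a) = ∑ i ∈ r.index, star (r.left i) ⊗ₜ[ℂ] star (r.right i))
    (hcounit_star : ∀ a : F, (Coalgebra.counit (star a) : ℂ) = starRingEnd ℂ (Coalgebra.counit a))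
    (hSbij : Function.Bijective (HopfAlgebra.antipode (R := ℂ) (A := F)))
    (π : F →ₗ[ℂ] K) (hπsurj : Function.Surjective π)
    (hπcomul : ∀ a : F, Coalgebra.comul (π a) = TensorProduct.map π π (Coalgebra.comul a))
    (hπcounit : ∀ a : F, (Coalgebra.counit (π a) : ℂ) = (Coalgebra.counit a : ℂ))
    (act : F →ₗ[ℂ] K →ₗ[ℂ] K)
    (hact_one : ∀ k : K, act 1 k = k)
    (hact_mul : ∀ (a b : F) (k : K), act (a * b) k = act a (act b k))
    (hact_π : ∀ a b : F, act a (π b) = π (a * b))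
    (τK : K → K)
    (hτK_add : ∀ x y : K, τK (x + y) = τK x + τK y)
    (hτK_smul : ∀ (c : ℂ) (x : K), τK (c • x) = (starRingEnd ℂ) c • τK x)
    (hτK_π : ∀ a : F, τK (π a) = π (star (HopfAlgebra.antipode (R := ℂ) a)))
    (ρR : V →ₗ[ℂ] V ⊗[ℂ] K)
    (hρ_counit : ∀ v : V,
      (TensorProduct.rid ℂ V) (LinearMap.lTensor V Coalgebra.counit (ρR v)) = v)
    (hρ_coassoc : ∀ v : V, (TensorProduct.assoc ℂ V K K) (LinearMap.rTensor K ρR (ρR v))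
        = LinearMap.lTensor V Coalgebra.comul (ρR v))
    :
    ∃ ρ : indK π ρR →ₗ[ℂ] (indK π ρR) ⊗[ℂ] F,
      -- `ρ` is the restriction of `id_V ⊗ Δ`
      (∀ A : indK π ρR,
        LinearMap.rTensor F (indK π ρR).subtype (ρ A)
          = (TensorProduct.assoc ℂ V F F).symm (LinearMap.lTensor V Coalgebra.comul A.val)) ∧
      -- counit axiom
      (∀ A : indK π ρR,
        (TensorProduct.rid ℂ (indK π ρR))
          (LinearMap.lTensor (indK π ρR) Coalgebra.counit (ρ A)) = A) ∧
      -- coassociativity axiom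
      (∀ A : indK π ρR,
        (TensorProduct.assoc ℂ (indK π ρR) F F) (LinearMap.rTensor F ρ (ρ A))
          = LinearMap.lTensor (indK π ρR) Coalgebra.comul (ρ A)) := by
  classical
  -- notation
  set D1 : V ⊗[ℂ] F →ₗ[ℂ] V ⊗[ℂ] (K ⊗[ℂ] F) :=
    LinearMap.lTensor V (LinearMap.rTensor F π ∘ₗ Coalgebra.comul) with hD1
  set D2 : V ⊗[ℂ] F →ₗ[ℂ] V ⊗[ℂ] (K ⊗[ℂ] F) :=
    (TensorProduct.assoc ℂ V K F).toLinearMap ∘ₗ LinearMap.rTensor F ρR with hD2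
  set Φ : V ⊗[ℂ] F →ₗ[ℂ] (V ⊗[ℂ] F) ⊗[ℂ] F :=
    (TensorProduct.assoc ℂ V F F).symm.toLinearMap ∘ₗ LinearMap.lTensor V Coalgebra.comul
    with hΦ
  have hNker : indK π ρR = LinearMap.ker (D1 - D2) := rfl
  -- part 1 of the key identity
  have part1 : ∀ x : V ⊗[ℂ] F,
      LinearMap.rTensor F D1 (Φ x)
        = (TensorProduct.assoc ℂ V (K ⊗[ℂ] F) F).symm
            (LinearMap.lTensor V (TensorProduct.assoc ℂ K F F).symm.toLinearMap
              (LinearMap.lTensor V (LinearMap.lTensor K Coalgebra.comul) (D1 x))) := by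
    intro x
    rw [hD1, hΦ]
    simp only [LinearMap.comp_apply, LinearEquiv.coe_coe]
    rw [aux_nat_symm_mid, ← LinearMap.lTensor_comp_apply, ← LinearMap.lTensor_comp_apply,
      ← LinearMap.lTensor_comp_apply]
    refine congrArg _ (LinearMap.congr_fun (congrArg (LinearMap.lTensor V) ?_) x)
    ext a
    simp only [LinearMap.comp_apply, LinearEquiv.coe_coe]
    exact aux_g1 π a
  -- part 2 of the key identity
  have part2 : ∀ x : V ⊗[ℂ] F,
      LinearMap.rTensor F D2 (Φ x)
        = (TensorProduct.assoc ℂ V (K ⊗[ℂ] F) F).symm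
            (LinearMap.lTensor V (TensorProduct.assoc ℂ K F F).symm.toLinearMap
              (LinearMap.lTensor V (LinearMap.lTensor K Coalgebra.comul) (D2 x))) := by
    intro x
    rw [hD2, hΦ]
    simp only [LinearMap.comp_apply, LinearEquiv.coe_coe]
    rw [LinearMap.rTensor_comp_apply, aux_nat_symm, aux_swap, aux_pent2, aux_nat_right]
  -- the key identity
  have hkey : ∀ x : V ⊗[ℂ] F, x ∈ indK π ρR → LinearMap.rTensor F (D1 - D2) (Φ x) = 0 := by
    intro x hx
    have hx0 : D1 x - D2 x = 0 := by
      have := LinearMap.mem_ker.mp (hNker ▸ hx)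
      simpa [LinearMap.sub_apply] using this
    have hx1 : D1 x = D2 x := by linear_combination (norm := abel) hx0
    have hsplit : LinearMap.rTensor F (D1 - D2) (Φ x)
        = LinearMap.rTensor F D1 (Φ x) - LinearMap.rTensor F D2 (Φ x) := by
      rw [LinearMap.rTensor_sub]
      rfl
    rw [hsplit, part1 x, part2 x, hx1, sub_self]
  -- membership of Φ x in the range of ι
  have hmem : ∀ x : V ⊗[ℂ] F, x ∈ indK π ρR →
      Φ x ∈ LinearMap.range (LinearMap.rTensor F (indK π ρR).subtype) := by
    intro x hx
    set N := indK π ρR with hN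
    have hle : N ≤ LinearMap.ker (D1 - D2) := le_of_eq hNker
    set Dbar := N.liftQ (D1 - D2) hle with hDbar
    have hfact : LinearMap.rTensor F (D1 - D2) (Φ x)
        = LinearMap.rTensor F Dbar (LinearMap.rTensor F N.mkQ (Φ x)) := by
      rw [← LinearMap.rTensor_comp_apply, Submodule.liftQ_mkQ]
    have hinjDbar : Function.Injective Dbar := by
      rw [← LinearMap.ker_eq_bot]
      exact Submodule.ker_liftQ_eq_bot _ _ _ (le_of_eq hNker.symm)
    have hinj2 : Function.Injective (LinearMap.rTensor F Dbar) :=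
      Module.Flat.rTensor_preserves_injective_linearMap Dbar hinjDbar
    have h0 : LinearMap.rTensor F N.mkQ (Φ x) = 0 := by
      apply hinj2
      rw [← hfact, hkey x hx, map_zero]
    have : Φ x ∈ LinearMap.ker (LinearMap.rTensor F N.mkQ) := h0
    rwa [rTensor_mkQ] at this
  -- the comodule map
  set N := indK π ρR with hN
  set ι := LinearMap.rTensor F N.subtype with hι
  have hinjι : Function.Injective ι :=
    Module.Flat.rTensor_preserves_injective_linearMap _ N.injective_subtype
  set e : (N ⊗[ℂ] F) ≃ₗ[ℂ] LinearMap.range ι := LinearEquiv.ofInjective ι hinjι with he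
  set ρ : N →ₗ[ℂ] N ⊗[ℂ] F :=
    e.symm.toLinearMap ∘ₗ
      LinearMap.codRestrict (LinearMap.range ι) (Φ ∘ₗ N.subtype)
        (fun A => hmem A.val A.2) with hρdef
  have hρ : ∀ A : N, ι (ρ A) = Φ A.val := by
    intro A
    have h1 : (e (ρ A) : (V ⊗[ℂ] F) ⊗[ℂ] F) = ι (ρ A) :=
      (LinearEquiv.ofInjective_apply ι (ρ A) : _)
    have h2 : e (ρ A) = ⟨Φ A.val, hmem A.val A.2⟩ := by
      rw [hρdef]
      simp only [LinearMap.comp_apply, LinearEquiv.coe_coe, LinearEquiv.apply_symm_apply]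
      rfl
    rw [← h1, h2]
  clear_value ρ e
  -- the global counit identity
  have hG4 : ∀ x : V ⊗[ℂ] F,
      (TensorProduct.rid ℂ (V ⊗[ℂ] F))
        (LinearMap.lTensor (V ⊗[ℂ] F) Coalgebra.counit (Φ x)) = x := by
    intro x
    rw [hΦ]
    simp only [LinearMap.comp_apply, LinearEquiv.coe_coe]
    rw [aux_nat_symm_right, ← LinearMap.lTensor_comp_apply,
      Coalgebra.lTensor_counit_comp_comul]
    exact aux_counit x
  -- the global coassociativity identity
  have hG3 : ∀ x : V ⊗[ℂ] F,
      (TensorProduct.assoc ℂ (V ⊗[ℂ] F) F F) (LinearMap.rTensor F Φ (Φ x))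
        = LinearMap.lTensor (V ⊗[ℂ] F) Coalgebra.comul (Φ x) := by
    intro x
    have hR : LinearMap.lTensor (V ⊗[ℂ] F) Coalgebra.comul (Φ x)
        = (TensorProduct.assoc ℂ V F (F ⊗[ℂ] F)).symm
            (LinearMap.lTensor V (LinearMap.lTensor F Coalgebra.comul)
              (LinearMap.lTensor V Coalgebra.comul x)) := by
      rw [hΦ]
      simp only [LinearMap.comp_apply, LinearEquiv.coe_coe]
      rw [aux_nat_symm_right]
    have hL2 : LinearMap.rTensor F Φ (Φ x)
        = LinearMap.rTensor F (TensorProduct.assoc ℂ V F F).symm.toLinearMap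
            ((TensorProduct.assoc ℂ V (F ⊗[ℂ] F) F).symm
              (LinearMap.lTensor V (LinearMap.rTensor F Coalgebra.comul)
                (LinearMap.lTensor V Coalgebra.comul x))) := by
      nth_rewrite 1 [hΦ]
      rw [LinearMap.rTensor_comp_apply]
      congr 1
      rw [hΦ]
      simp only [LinearMap.comp_apply, LinearEquiv.coe_coe]
      rw [aux_nat_symm_mid]
    have hL3 : LinearMap.lTensor V (LinearMap.rTensor F Coalgebra.comul)
          (LinearMap.lTensor V Coalgebra.comul x)
        = LinearMap.lTensor V (TensorProduct.assoc ℂ F F F).symm.toLinearMap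
            (LinearMap.lTensor V (LinearMap.lTensor F Coalgebra.comul)
              (LinearMap.lTensor V Coalgebra.comul x)) := by
      rw [← LinearMap.lTensor_comp_apply, ← LinearMap.lTensor_comp_apply,
        ← LinearMap.lTensor_comp_apply]
      refine LinearMap.congr_fun (congrArg (LinearMap.lTensor V) ?_) x
      exact Coalgebra.coassoc_symm.symm
    rw [hL2, hL3, hR]
    exact aux_pent3 _
  refine ⟨ρ, ?_, ?_, ?_⟩
  · -- restriction property
    intro A
    have := hρ A
    rw [hι, hΦ] at this
    simpa only [LinearMap.comp_apply, LinearEquiv.coe_coe] using this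
  · -- counit axiom
    intro A
    apply Subtype.ext
    have nat1 : ∀ s : N ⊗[ℂ] ℂ, ((TensorProduct.rid ℂ N) s : V ⊗[ℂ] F)
        = (TensorProduct.rid ℂ (V ⊗[ℂ] F)) (LinearMap.rTensor ℂ N.subtype s) := by
      intro s
      have h : (N.subtype ∘ₗ (TensorProduct.rid ℂ N).toLinearMap)
          = ((TensorProduct.rid ℂ (V ⊗[ℂ] F)).toLinearMap ∘ₗ LinearMap.rTensor ℂ N.subtype) := by
        apply TensorProduct.ext'
        intro n c
        simp
      exact LinearMap.congr_fun h s
    rw [nat1, aux_swap N.subtype Coalgebra.counit (ρ A)]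
    rw [show LinearMap.rTensor F N.subtype (ρ A) = Φ A.val from hρ A]
    exact hG4 A.val
  · -- coassociativity axiom
    intro A
    have hinjJ : Function.Injective (LinearMap.rTensor (F ⊗[ℂ] F) N.subtype) :=
      Module.Flat.rTensor_preserves_injective_linearMap _ N.injective_subtype
    apply hinjJ
    --右辺
    have hRHS : LinearMap.rTensor (F ⊗[ℂ] F) N.subtype
          (LinearMap.lTensor N Coalgebra.comul (ρ A))
        = LinearMap.lTensor (V ⊗[ℂ] F) Coalgebra.comul (Φ A.val) := by
      rw [aux_swap N.subtype Coalgebra.comul (ρ A),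
        show LinearMap.rTensor F N.subtype (ρ A) = Φ A.val from hρ A]
    have hcomp : LinearMap.rTensor F N.subtype ∘ₗ ρ = Φ ∘ₗ N.subtype := by
      apply LinearMap.ext
      intro B
      exact hρ B
    have hLHS : LinearMap.rTensor (F ⊗[ℂ] F) N.subtype
          ((TensorProduct.assoc ℂ N F F) (LinearMap.rTensor F ρ (ρ A)))
        = (TensorProduct.assoc ℂ (V ⊗[ℂ] F) F F) (LinearMap.rTensor F Φ (Φ A.val)) := by
      rw [aux_nat_assoc_left]
      congr 1
      rw [← LinearMap.rTensor_comp_apply, hcomp, LinearMap.rTensor_comp_apply,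
        show LinearMap.rTensor F N.subtype (ρ A) = Φ A.val from hρ A]
    rw [hLHS, hRHS]
    exact hG3 A.val
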